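/- Andréief's identity: for functions f_1,...,f_n and g_1,...,g_n integrable on a measure space (C, μ), ∫⋯∫ det(f_i(ζ_j)) · det(g_i(ζ_j)) dμ(ζ_1)⋯dμ(ζ_n) = n! · det(∫ f_i(ζ) g_j(ζ) dμ(ζ))_{1≤i,j≤n}. -/

import Mathlib

open MeasureTheory Finset Equiv

private lemma andreief_alg {n : ℕ} (M : Matrix (Fin n) (Fin n) ℂ) :
    ∑ σ : Perm (Fin n), ∑ τ : Perm (Fin n),
      (((Perm.sign σ : ℤ) : ℂ) * ((Perm.sign τ : ℤ) : ℂ)) * ∏ j, M (σ j) (τ j)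
      = (Nat.factorial n : ℂ) * M.det := by
  have key : ∀ τ : Perm (Fin n),
      ∑ σ : Perm (Fin n),
        (((Perm.sign σ : ℤ) : ℂ) * ((Perm.sign τ : ℤ) : ℂ)) * ∏ j, M (σ j) (τ j) = M.det := by
    intro τ
    rw [← Equiv.sum_comp (Equiv.mulRight τ)
      (fun σ => (((Perm.sign σ : ℤ) : ℂ) * ((Perm.sign τ : ℤ) : ℂ)) * ∏ j, M (σ j) (τ j))]
    rw [Matrix.det_apply']
    refine Finset.sum_congr rfl fun ρ _ => ?_
    have h1 : ∏ j, M ((Equiv.mulRight τ ρ) j) (τ j) = ∏ j, M (ρ j) j := by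
      simpa using Equiv.prod_comp τ (fun j => M (ρ j) j)
    have h2 : ((Perm.sign (Equiv.mulRight τ ρ) : ℤ) : ℂ) = ((Perm.sign ρ : ℤ) : ℂ) * ((Perm.sign τ : ℤ) : ℂ) := by
      simp [Equiv.Perm.sign_mul]
    have h3 : ((Perm.sign τ : ℤ) : ℂ) * ((Perm.sign τ : ℤ) : ℂ) = 1 := by
      rcases Int.units_eq_one_or (Perm.sign τ) with h | h <;> simp [h]
    rw [h1, h2]
    rw [mul_assoc ((Perm.sign ρ : ℤ) : ℂ), h3, mul_one]
  rw [Finset.sum_comm]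
  simp only [key, Finset.sum_const, Finset.card_univ, Fintype.card_perm, Fintype.card_fin, nsmul_eq_mul]

set_option maxHeartbeats 1000000 in
/-- Andréief's identity: for measurable families `f_i, g_j : C → ℂ` with all
products `f_i · g_j` integrable,
`∫⋯∫ det(f_i(ζ_j)) det(g_i(ζ_j)) dμ(ζ_1)⋯dμ(ζ_n)
  = n! · det(∫ f_i g_j dμ)`. -/
theorem andreief_identity {C : Type*} [MeasurableSpace C] (μ : Measure C) [SigmaFinite μ]
    (n : ℕ) (f g : Fin n → C → ℂ)
    (hf : ∀ i, AEStronglyMeasurable (f i) μ)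
    (hg : ∀ j, AEStronglyMeasurable (g j) μ)
    (hfg : ∀ i j, Integrable (fun ζ => f i ζ * g j ζ) μ) :
    ∫ ζ : Fin n → C,
        Matrix.det (Matrix.of fun i j => f i (ζ j)) *
          Matrix.det (Matrix.of fun i j => g i (ζ j))
        ∂(Measure.pi fun _ => μ)
      = (Nat.factorial n : ℂ) *
        Matrix.det (Matrix.of fun i j => ∫ z, f i z * g j z ∂μ) := by
  letI : MeasureSpace C := ⟨μ⟩
  have hInt : ∀ σ τ : Perm (Fin n),
      Integrable (fun ζ : Fin n → C => ∏ j, f (σ j) (ζ j) * g (τ j) (ζ j))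
        (Measure.pi fun _ => μ) :=
    fun σ τ => Integrable.fintype_prod (fun j => hfg (σ j) (τ j))
  have step1 : ∫ ζ : Fin n → C,
        Matrix.det (Matrix.of fun i j => f i (ζ j)) *
          Matrix.det (Matrix.of fun i j => g i (ζ j)) ∂(Measure.pi fun _ => μ)
      = ∑ σ : Perm (Fin n), ∑ τ : Perm (Fin n),
          (((Perm.sign σ : ℤ) : ℂ) * ((Perm.sign τ : ℤ) : ℂ)) *
            ∫ ζ : Fin n → C, ∏ j, f (σ j) (ζ j) * g (τ j) (ζ j) ∂(Measure.pi fun _ => μ) := by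
    have : ∀ ζ : Fin n → C,
        Matrix.det (Matrix.of fun i j => f i (ζ j)) *
          Matrix.det (Matrix.of fun i j => g i (ζ j))
        = ∑ σ : Perm (Fin n), ∑ τ : Perm (Fin n),
            (((Perm.sign σ : ℤ) : ℂ) * ((Perm.sign τ : ℤ) : ℂ)) *
              ∏ j, f (σ j) (ζ j) * g (τ j) (ζ j) := by
      intro ζ
      rw [Matrix.det_apply', Matrix.det_apply', Finset.sum_mul_sum]
      refine Finset.sum_congr rfl fun σ _ => Finset.sum_congr rfl fun τ _ => ?_
      rw [Finset.prod_mul_distrib]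
      simp only [Matrix.of_apply]
      ring
    simp_rw [this]
    rw [integral_finset_sum _ (fun σ _ => ?_)]
    · refine Finset.sum_congr rfl fun σ _ => ?_
      rw [integral_finset_sum _ (fun τ _ => ((hInt σ τ).const_mul _))]
      exact Finset.sum_congr rfl fun τ _ => integral_const_mul _ _
    · exact integrable_finset_sum _ (fun τ _ => ((hInt σ τ).const_mul _))
  have step2 : ∀ σ τ : Perm (Fin n),
      ∫ ζ : Fin n → C, ∏ j, f (σ j) (ζ j) * g (τ j) (ζ j) ∂(Measure.pi fun _ => μ)
        = ∏ j, ∫ z, f (σ j) z * g (τ j) z ∂μ := fun σ τ =>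
    integral_fintype_prod_eq_prod (fun j z => f (σ j) z * g (τ j) z)
  rw [step1, ← andreief_alg (Matrix.of fun i j => ∫ z, f i z * g j z ∂μ)]
  refine Finset.sum_congr rfl fun σ _ => Finset.sum_congr rfl fun τ _ => ?_
  rw [step2 σ τ]
  rfl
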